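/- Let θ ∈ [0,1), α ∈ (0,1), let a < b be real numbers, let f ∈ C^α([a,b]) and let ψ_a, ψ_b be positive real numbers. Let S be the set of functions v ∈ C²([a,b]) with v″ > 0 on [a,b], v(a) = v(b) = 0, (v″(a))^{θ−1} = ψ_a and (v″(b))^{θ−1} = ψ_b, and define L(v) = ∫_a^b f v dx + ψ_b v′(b) − ψ_a v′(a). Then the following are equivalent: (i) there exists u ∈ C^{4,α}([a,b]) with u″ > 0 on [a,b] such that ((u″)^{θ−1})″ = f on (a,b), u(a) = u(b) = 0, (u″(a))^{θ−1} = ψ_a and (u″(b))^{θ−1} = ψ_b; (ii) there exist λ > 0 and a constant C such that L(v) ≥ λ(v′(b) − v′(a)) − C for all v ∈ S. -/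

import Mathlib

open scoped Topology NNReal
open Set Filter

noncomputable section

/-- The class `S` of admissible functions: `C²` on `[a,b]`, with `v'' > 0`,
`v(a) = v(b) = 0`, `(v''(a))^{θ-1} = ψa` and `(v''(b))^{θ-1} = ψb`. -/
def admissible1d (θ a b ψa ψb : ℝ) (v : ℝ → ℝ) : Prop :=
  ContDiffOn ℝ 2 v (Icc a b) ∧
    (∀ x ∈ Icc a b, 0 < iteratedDerivWithin 2 v (Icc a b) x) ∧
    v a = 0 ∧ v b = 0 ∧
    (iteratedDerivWithin 2 v (Icc a b) a) ^ (θ - 1) = ψa ∧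
    (iteratedDerivWithin 2 v (Icc a b) b) ^ (θ - 1) = ψb

/-- The functional `L(v) = ∫_a^b f v dx + ψb v'(b) − ψa v'(a)`. -/
def Lfunc1d (f : ℝ → ℝ) (a b ψa ψb : ℝ) (v : ℝ → ℝ) : ℝ :=
  (∫ x in a..b, f x * v x) + ψb * derivWithin v (Icc a b) b -
    ψa * derivWithin v (Icc a b) a

namespace BVPAux
open MeasureTheory intervalIntegral

/-- primitive -/
def P (g : ℝ → ℝ) (a : ℝ) : ℝ → ℝ := fun x => ∫ t in a..x, g t

lemma P_hasDerivAt {g : ℝ → ℝ} (hg : Continuous g) (a x : ℝ) :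
    HasDerivAt (P g a) (g x) x :=
  (hg.integral_hasStrictDerivAt a x).hasDerivAt

lemma P_cont {g : ℝ → ℝ} (hg : Continuous g) (a : ℝ) : Continuous (P g a) := by
  rw [continuous_iff_continuousAt]
  exact fun x => (P_hasDerivAt hg a x).continuousAt

lemma P_base {g : ℝ → ℝ} (a : ℝ) : P g a a = 0 := intervalIntegral.integral_same

/-- the basic gadget: double primitive plus affine function -/
def V (g : ℝ → ℝ) (a r s : ℝ) : ℝ → ℝ := fun x => P (P g a) a x + (r + s * (x - a))

lemma V_hasDerivAt {g : ℝ → ℝ} (hg : Continuous g) (a r s x : ℝ) :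
    HasDerivAt (V g a r s) (P g a x + s) x := by
  have h1 : HasDerivAt (P (P g a) a) (P g a x) x := P_hasDerivAt (P_cont hg a) a x
  have h2 : HasDerivAt (fun x : ℝ => r + s * (x - a)) s x := by
    simpa using (((hasDerivAt_id x).sub_const a).const_mul s).const_add r
  exact h1.add h2

lemma V_a {g : ℝ → ℝ} (a r s : ℝ) : V g a r s a = r := by
  simp [V, P_base]

lemma V_b {g : ℝ → ℝ} (a r s b : ℝ) : V g a r s b = P (P g a) a b + r + s * (b - a) := by
  simp [V]; ring

lemma V_cont {g : ℝ → ℝ} (hg : Continuous g) (a r s : ℝ) : Continuous (V g a r s) := by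
  rw [continuous_iff_continuousAt]
  exact fun x => (V_hasDerivAt hg a r s x).continuousAt

variable {a b : ℝ}

lemma V_derivWithin (hab : a < b) {g : ℝ → ℝ} (hg : Continuous g) (r s : ℝ) {x : ℝ}
    (hx : x ∈ Icc a b) :
    derivWithin (V g a r s) (Icc a b) x = P g a x + s :=
  (V_hasDerivAt hg a r s x).hasDerivWithinAt.derivWithin ((uniqueDiffOn_Icc hab) x hx)

lemma itder2 (hab : a < b) {f : ℝ → ℝ} {x : ℝ} (hx : x ∈ Icc a b) :
    iteratedDerivWithin 2 f (Icc a b) x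
      = derivWithin (derivWithin f (Icc a b)) (Icc a b) x := by
  have hI := uniqueDiffOn_Icc hab
  rw [show (2:ℕ) = 1+1 from rfl, iteratedDerivWithin_succ]
  exact derivWithin_congr (fun y hy => congrFun iteratedDerivWithin_one y)
    (congrFun iteratedDerivWithin_one x)

lemma V_iter2 (hab : a < b) {g : ℝ → ℝ} (hg : Continuous g) (r s : ℝ) {x : ℝ}
    (hx : x ∈ Icc a b) :
    iteratedDerivWithin 2 (V g a r s) (Icc a b) x = g x := by
  have hI := uniqueDiffOn_Icc hab
  rw [itder2 hab hx]
  have h1 : EqOn (derivWithin (V g a r s) (Icc a b)) (fun y => P g a y + s) (Icc a b) :=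
    fun y hy => V_derivWithin hab hg r s hy
  rw [derivWithin_congr h1 (h1 hx)]
  exact ((P_hasDerivAt hg a x).add_const s).hasDerivWithinAt.derivWithin (hI x hx)

lemma contDiffOn_P_succ (hab : a < b) {g : ℝ → ℝ} (hg : Continuous g)
    {n : WithTop ℕ∞} (hn : n ≠ ⊤) (hgI : ContDiffOn ℝ n g (Icc a b)) :
    ContDiffOn ℝ (n+1) (P g a) (Icc a b) := by
  rw [contDiffOn_succ_iff_derivWithin (uniqueDiffOn_Icc hab)]
  refine ⟨fun x hx => ((P_hasDerivAt hg a x).differentiableAt.differentiableWithinAt), ?_, ?_⟩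
  · intro h; exact absurd h hn
  · have h1 : EqOn (derivWithin (P g a) (Icc a b)) g (Icc a b) := fun x hx =>
      (P_hasDerivAt hg a x).hasDerivWithinAt.derivWithin ((uniqueDiffOn_Icc hab) x hx)
    exact hgI.congr fun x hx => h1 hx

lemma V_contDiffOn (hab : a < b) {g : ℝ → ℝ} (hg : Continuous g) (r s : ℝ)
    {n : ℕ} (hgI : ContDiffOn ℝ n g (Icc a b)) :
    ContDiffOn ℝ (n+2) (V g a r s) (Icc a b) := by
  have h1 : ContDiffOn ℝ (n+1) (P g a) (Icc a b) :=
    contDiffOn_P_succ hab hg (by exact_mod_cast WithTop.natCast_ne_top n) hgI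
  have h2 : ContDiffOn ℝ ((n+1)+1) (P (P g a) a) (Icc a b) :=
    contDiffOn_P_succ hab (P_cont hg a) (by exact_mod_cast WithTop.natCast_ne_top (n+1)) h1
  have h3 : ContDiffOn ℝ ((n+1)+1) (fun x : ℝ => r + s * (x - a)) (Icc a b) :=
    (contDiff_const.add ((contDiff_const).mul (contDiff_id.sub contDiff_const))).contDiffOn
  have := h2.add h3
  have he : ((n:WithTop ℕ∞)+1)+1 = ((n+2 : ℕ) : WithTop ℕ∞) := by push_cast; ring
  rw [he] at this
  exact this


/-- real-valued Hölder condition via `dist` -/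
def HolderD (K e : ℝ) (f : ℝ → ℝ) (s : Set ℝ) : Prop :=
  ∀ x ∈ s, ∀ y ∈ s, |f x - f y| ≤ K * |x - y| ^ e

lemma holderD_of_holderOnWith {C e : ℝ≥0} {f : ℝ → ℝ} {s : Set ℝ}
    (h : HolderOnWith C e f s) : HolderD C e f s := by
  intro x hx y hy
  have h1 := h.edist_le hx hy
  rw [edist_dist, edist_dist, ENNReal.ofReal_rpow_of_nonneg dist_nonneg e.coe_nonneg] at h1
  simp only [← ENNReal.ofReal_coe_nnreal, ← ENNReal.ofReal_mul C.coe_nonneg] at h1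
  have h2 := (ENNReal.ofReal_le_ofReal_iff
    (mul_nonneg C.coe_nonneg (Real.rpow_nonneg dist_nonneg _))).mp h1
  simpa [Real.dist_eq] using h2

lemma holderOnWith_of_holderD {K : ℝ} {e : ℝ≥0} {f : ℝ → ℝ} {s : Set ℝ}
    (hK : 0 ≤ K) (h : HolderD K e f s) : HolderOnWith K.toNNReal e f s := by
  intro x hx y hy
  have h1 := h x hx y hy
  rw [edist_dist, edist_dist, ENNReal.ofReal_rpow_of_nonneg dist_nonneg e.coe_nonneg]
  simp only [← ENNReal.ofReal_coe_nnreal, Real.coe_toNNReal K hK, ← ENNReal.ofReal_mul hK]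
  exact ENNReal.ofReal_le_ofReal (by simpa [Real.dist_eq] using h1)

lemma holderD_congr {K e : ℝ} {f g : ℝ → ℝ} {s : Set ℝ} (hfg : EqOn f g s)
    (h : HolderD K e f s) : HolderD K e g s := by
  intro x hx y hy
  rw [← hfg hx, ← hfg hy]; exact h x hx y hy

lemma HolderD.add {K1 K2 e : ℝ} {f g : ℝ → ℝ} {s : Set ℝ}
    (h1 : HolderD K1 e f s) (h2 : HolderD K2 e g s) :
    HolderD (K1 + K2) e (fun x => f x + g x) s := by
  intro x hx y hy
  calc |f x + g x - (f y + g y)| ≤ |f x - f y| + |g x - g y| := by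
        rw [show f x + g x - (f y + g y) = (f x - f y) + (g x - g y) by ring]
        exact abs_add_le _ _
    _ ≤ K1 * |x - y| ^ e + K2 * |x - y| ^ e := add_le_add (h1 x hx y hy) (h2 x hx y hy)
    _ = (K1 + K2) * |x - y| ^ e := by ring

lemma HolderD.mul {K1 K2 e Mf Mg : ℝ} {f g : ℝ → ℝ} {s : Set ℝ}
    (h1 : HolderD K1 e f s) (h2 : HolderD K2 e g s)
    (hMf : ∀ x ∈ s, |f x| ≤ Mf) (hMg : ∀ x ∈ s, |g x| ≤ Mg) :
    HolderD (Mf * K2 + Mg * K1) e (fun x => f x * g x) s := by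
  intro x hx y hy
  have key : f x * g x - f y * g y = f x * (g x - g y) + g y * (f x - f y) := by ring
  calc |f x * g x - f y * g y| ≤ |f x| * |g x - g y| + |g y| * |f x - f y| := by
        rw [key]
        exact (abs_add_le _ _).trans (by rw [abs_mul, abs_mul])
    _ ≤ Mf * (K2 * |x - y| ^ e) + Mg * (K1 * |x - y| ^ e) := by
        apply add_le_add
        · exact mul_le_mul (hMf x hx) (h2 x hx y hy) (abs_nonneg _)
            ((abs_nonneg (f x)).trans (hMf x hx))
        · exact mul_le_mul (hMg y hy) (h1 x hx y hy) (abs_nonneg _)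
            ((abs_nonneg (g y)).trans (hMg y hy))
    _ = (Mf * K2 + Mg * K1) * |x - y| ^ e := by ring

lemma holderD_of_lip {a b K e : ℝ} (hab : a < b) (hK : 0 ≤ K) (he0 : 0 < e) (he1 : e ≤ 1)
    {f : ℝ → ℝ} (h : ∀ x ∈ Icc a b, ∀ y ∈ Icc a b, |f x - f y| ≤ K * |x - y|) :
    HolderD (K * (b - a) ^ (1 - e)) e f (Icc a b) := by
  intro x hx y hy
  rcases eq_or_ne x y with rfl | hxy
  · simp [sub_self, abs_zero, Real.zero_rpow (ne_of_gt he0)]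
  · have hd : 0 < |x - y| := abs_pos.mpr (sub_ne_zero.mpr hxy)
    have hdba : |x - y| ≤ b - a := by
      rw [abs_sub_le_iff]; constructor <;> linarith [hx.1, hx.2, hy.1, hy.2]
    calc |f x - f y| ≤ K * |x - y| := h x hx y hy
      _ = K * (|x - y| ^ (1 - e) * |x - y| ^ e) := by
          rw [← Real.rpow_add hd, sub_add_cancel, Real.rpow_one]
      _ ≤ K * ((b - a) ^ (1 - e) * |x - y| ^ e) := by
          apply mul_le_mul_of_nonneg_left _ hK
          exact mul_le_mul_of_nonneg_right
            (Real.rpow_le_rpow (abs_nonneg _) hdba (by linarith))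
            (Real.rpow_nonneg (abs_nonneg _) _)
      _ = K * (b - a) ^ (1 - e) * |x - y| ^ e := by ring

lemma lip_of_contDiffOn {a b : ℝ} (hab : a < b) {f : ℝ → ℝ}
    (h : ContDiffOn ℝ 1 f (Icc a b)) :
    ∃ K, 0 ≤ K ∧ ∀ x ∈ Icc a b, ∀ y ∈ Icc a b, |f x - f y| ≤ K * |x - y| := by
  have hI := uniqueDiffOn_Icc hab
  have h1 : ContDiffOn ℝ (0+1) f (Icc a b) := by norm_num; exact h
  rw [contDiffOn_succ_iff_derivWithin hI] at h1
  obtain ⟨hdiff, -, hd0⟩ := h1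
  have hcont : ContinuousOn (derivWithin f (Icc a b)) (Icc a b) := hd0.continuousOn
  obtain ⟨C, hC⟩ := (isCompact_Icc).exists_bound_of_continuousOn hcont
  refine ⟨max C 0, le_max_right _ _, fun x hx y hy => ?_⟩
  have := Convex.norm_image_sub_le_of_norm_derivWithin_le (𝕜 := ℝ) hdiff
    (fun z hz => (hC z hz).trans (le_max_left C (0:ℝ))) (convex_Icc a b) hy hx
  simpa [Real.norm_eq_abs] using this

lemma bound_of_continuousOn {a b : ℝ} {f : ℝ → ℝ} (h : ContinuousOn f (Icc a b)) :
    ∃ M, 0 ≤ M ∧ ∀ x ∈ Icc a b, |f x| ≤ M := by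
  obtain ⟨C, hC⟩ := (isCompact_Icc).exists_bound_of_continuousOn h
  refine ⟨max C 0, le_max_right _ _, fun x hx => ?_⟩
  have h1 : |f x| ≤ C := by simpa [Real.norm_eq_abs] using hC x hx
  exact h1.trans (le_max_left _ _)


/-! ### C² functions on Icc : derivative facts and integration by parts -/

section C2
variable {a b : ℝ} {v W : ℝ → ℝ}

lemma derivWithin_contDiffOn (hab : a < b) (h : ContDiffOn ℝ 2 v (Icc a b)) :
    ContDiffOn ℝ 1 (derivWithin v (Icc a b)) (Icc a b) := by
  rw [show (2 : WithTop ℕ∞) = 1 + 1 by norm_num] at h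
  exact ((contDiffOn_succ_iff_derivWithin (uniqueDiffOn_Icc hab)).mp h).2.2

lemma d1_hasDerivWithinAt (hab : a < b) (h : ContDiffOn ℝ 2 v (Icc a b)) {x : ℝ}
    (hx : x ∈ Icc a b) :
    HasDerivWithinAt v (derivWithin v (Icc a b) x) (Icc a b) x :=
  ((h.differentiableOn (by norm_num)) x hx).hasDerivWithinAt

lemma d2_hasDerivWithinAt (hab : a < b) (h : ContDiffOn ℝ 2 v (Icc a b)) {x : ℝ}
    (hx : x ∈ Icc a b) :
    HasDerivWithinAt (derivWithin v (Icc a b)) (iteratedDerivWithin 2 v (Icc a b) x)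
      (Icc a b) x := by
  rw [itder2 hab hx]
  exact (((derivWithin_contDiffOn hab h).differentiableOn (by norm_num)) x hx).hasDerivWithinAt

lemma d1_contOn (hab : a < b) (h : ContDiffOn ℝ 2 v (Icc a b)) :
    ContinuousOn (derivWithin v (Icc a b)) (Icc a b) :=
  (derivWithin_contDiffOn hab h).continuousOn

lemma iter2_contOn (hab : a < b) (h : ContDiffOn ℝ 2 v (Icc a b)) :
    ContinuousOn (iteratedDerivWithin 2 v (Icc a b)) (Icc a b) := by
  have h1 : ContDiffOn ℝ (0+1) (derivWithin v (Icc a b)) (Icc a b) := by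
    norm_num; exact derivWithin_contDiffOn hab h
  rw [contDiffOn_succ_iff_derivWithin (uniqueDiffOn_Icc hab)] at h1
  exact (h1.2.2.continuousOn).congr fun x hx => itder2 hab hx

lemma intInt (hab : a < b) {g : ℝ → ℝ} (hg : ContinuousOn g (Icc a b)) :
    IntervalIntegrable g volume a b := by
  apply ContinuousOn.intervalIntegrable
  rwa [uIcc_of_le hab.le]

/-- FTC: integral of second derivative -/
lemma integral_iter2 (hab : a < b) (h : ContDiffOn ℝ 2 v (Icc a b)) :
    ∫ x in a..b, iteratedDerivWithin 2 v (Icc a b) x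
      = derivWithin v (Icc a b) b - derivWithin v (Icc a b) a := by
  apply intervalIntegral.integral_eq_sub_of_hasDeriv_right_of_le hab.le
    (d1_contOn hab h) ?_ (intInt hab (iter2_contOn hab h))
  intro x hx
  exact (((d2_hasDerivWithinAt hab h (mem_Icc_of_Ioo hx)).hasDerivAt
    (Icc_mem_nhds hx.1 hx.2)).hasDerivWithinAt)

/-- Integration by parts twice -/
lemma key_ibp (hab : a < b) (hW : ContDiffOn ℝ 2 W (Icc a b)) (hv : ContDiffOn ℝ 2 v (Icc a b))
    (hva : v a = 0) (hvb : v b = 0) :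
    ∫ x in a..b, iteratedDerivWithin 2 W (Icc a b) x * v x
      = W a * derivWithin v (Icc a b) a - W b * derivWithin v (Icc a b) b
        + ∫ x in a..b, W x * iteratedDerivWithin 2 v (Icc a b) x := by
  have hIcc : uIcc a b = Icc a b := uIcc_of_le hab.le
  set W1 := derivWithin W (Icc a b)
  set v1 := derivWithin v (Icc a b)
  set W2 := iteratedDerivWithin 2 W (Icc a b)
  set v2 := iteratedDerivWithin 2 v (Icc a b)
  have hvd : ∀ x ∈ uIcc a b, HasDerivWithinAt v (v1 x) (uIcc a b) x := by
    rw [hIcc]; exact fun x hx => d1_hasDerivWithinAt hab hv hx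
  have hWd : ∀ x ∈ uIcc a b, HasDerivWithinAt W (W1 x) (uIcc a b) x := by
    rw [hIcc]; exact fun x hx => d1_hasDerivWithinAt hab hW hx
  have hv1d : ∀ x ∈ uIcc a b, HasDerivWithinAt v1 (v2 x) (uIcc a b) x := by
    rw [hIcc]; exact fun x hx => d2_hasDerivWithinAt hab hv hx
  have hW1d : ∀ x ∈ uIcc a b, HasDerivWithinAt W1 (W2 x) (uIcc a b) x := by
    rw [hIcc]; exact fun x hx => d2_hasDerivWithinAt hab hW hx
  have hv1i := intInt hab (d1_contOn hab hv)
  have hW1i := intInt hab (d1_contOn hab hW)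
  have hv2i := intInt hab (iter2_contOn hab hv)
  have hW2i := intInt hab (iter2_contOn hab hW)
  have step1 : ∫ x in a..b, v x * W2 x
      = v b * W1 b - v a * W1 a - ∫ x in a..b, v1 x * W1 x :=
    intervalIntegral.integral_mul_deriv_eq_deriv_mul_of_hasDerivWithinAt hvd hW1d hv1i hW2i
  have step2 : ∫ x in a..b, W x * v2 x
      = W b * v1 b - W a * v1 a - ∫ x in a..b, W1 x * v1 x :=
    intervalIntegral.integral_mul_deriv_eq_deriv_mul_of_hasDerivWithinAt hWd hv1d hW1i hv2i
  have comm1 : ∫ x in a..b, W2 x * v x = ∫ x in a..b, v x * W2 x :=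
    intervalIntegral.integral_congr fun x _ => mul_comm _ _
  have comm2 : ∫ x in a..b, v1 x * W1 x = ∫ x in a..b, W1 x * v1 x :=
    intervalIntegral.integral_congr fun x _ => mul_comm _ _
  rw [comm1, step1, hva, hvb, comm2]
  have : ∫ x in a..b, W1 x * v1 x = W b * v1 b - W a * v1 a - ∫ x in a..b, W x * v2 x := by
    rw [step2]; ring
  rw [this]; ring

end C2

/-! ### the L functional -/

section Lsec
variable {a b : ℝ} {f W v : ℝ → ℝ} {ψa ψb : ℝ}

lemma L_eq (hab : a < b) (hW : ContDiffOn ℝ 2 W (Icc a b))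
    (hWf : ∀ x ∈ Ioo a b, iteratedDerivWithin 2 W (Icc a b) x = f x)
    (hWa : W a = ψa) (hWb : W b = ψb)
    (hv : ContDiffOn ℝ 2 v (Icc a b)) (hva : v a = 0) (hvb : v b = 0) :
    Lfunc1d f a b ψa ψb v = ∫ x in a..b, W x * iteratedDerivWithin 2 v (Icc a b) x := by
  have hb : ∀ᵐ x ∂(volume : Measure ℝ), x ≠ b := by
    rw [ae_iff]
    simpa [not_not, setOf_eq_eq_singleton] using measure_singleton (b : ℝ)
  have hfW2 : ∫ x in a..b, f x * v x
      = ∫ x in a..b, iteratedDerivWithin 2 W (Icc a b) x * v x := by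
    apply intervalIntegral.integral_congr_ae
    filter_upwards [hb] with x hxb hxI
    rw [uIoc_of_le hab.le] at hxI
    rw [hWf x ⟨hxI.1, lt_of_le_of_ne hxI.2 hxb⟩]
  unfold Lfunc1d
  rw [hfW2, key_ibp hab hW hv hva hvb, hWa, hWb]
  ring

lemma rpow_inv_cancel {θ t : ℝ} (hθ : θ < 1) (ht : 0 < t) :
    (t ^ (1 / (θ - 1))) ^ (θ - 1) = t := by
  rw [← Real.rpow_mul ht.le, one_div,
    inv_mul_cancel₀ (sub_ne_zero.mpr (ne_of_lt hθ)), Real.rpow_one]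

lemma contDiffOn_rpow_comp {n : WithTop ℕ∞} {s : Set ℝ} {g : ℝ → ℝ} (hg : ContDiffOn ℝ n g s)
    (hpos : ∀ x ∈ s, 0 < g x) (p : ℝ) : ContDiffOn ℝ n (fun x => g x ^ p) s := by
  have hrp : ContDiffOn ℝ n (fun t : ℝ => t ^ p) {t : ℝ | t ≠ 0} := fun t ht =>
    (Real.contDiffAt_rpow_const_of_ne ht).contDiffWithinAt
  exact hrp.comp hg fun x hx => ne_of_gt (hpos x hx)

lemma iter2_contDiffOn (hab : a < b) {u : ℝ → ℝ} (hu : ContDiffOn ℝ 4 u (Icc a b)) :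
    ContDiffOn ℝ 2 (iteratedDerivWithin 2 u (Icc a b)) (Icc a b) := by
  have hI := uniqueDiffOn_Icc hab
  rw [show (4 : WithTop ℕ∞) = 3 + 1 by norm_num] at hu
  have h3 : ContDiffOn ℝ 3 (derivWithin u (Icc a b)) (Icc a b) :=
    ((contDiffOn_succ_iff_derivWithin hI).mp hu).2.2
  rw [show (3 : WithTop ℕ∞) = 2 + 1 by norm_num] at h3
  have h2 : ContDiffOn ℝ 2 (derivWithin (derivWithin u (Icc a b)) (Icc a b)) (Icc a b) :=
    ((contDiffOn_succ_iff_derivWithin hI).mp h3).2.2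
  exact h2.congr fun x hx => itder2 hab hx

/-- the forward direction workhorse: if some `C²` function `W` satisfies `W'' = f` on `(a,b)`
with the right boundary values and is positive, then `L` is proper. -/
lemma forward_of_W (hab : a < b) (hW : ContDiffOn ℝ 2 W (Icc a b))
    (hWf : ∀ x ∈ Ioo a b, iteratedDerivWithin 2 W (Icc a b) x = f x)
    (hWa : W a = ψa) (hWb : W b = ψb) (hWpos : ∀ x ∈ Icc a b, 0 < W x) :
    ∃ lam > (0:ℝ), ∃ C : ℝ, ∀ v : ℝ → ℝ,
      (ContDiffOn ℝ 2 v (Icc a b) ∧ (∀ x ∈ Icc a b, 0 < iteratedDerivWithin 2 v (Icc a b) x)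
        ∧ v a = 0 ∧ v b = 0) →
      Lfunc1d f a b ψa ψb v ≥
        lam * (derivWithin v (Icc a b) b - derivWithin v (Icc a b) a) - C := by
  obtain ⟨x0, hx0I, hx0min⟩ := isCompact_Icc.exists_isMinOn (nonempty_Icc.mpr hab.le)
    hW.continuousOn
  refine ⟨W x0, hWpos x0 hx0I, 0, ?_⟩
  rintro v ⟨hv, hvpos, hva, hvb⟩
  rw [L_eq hab hW hWf hWa hWb hv hva hvb, sub_zero, ← integral_iter2 hab hv,
    ← intervalIntegral.integral_const_mul]
  apply intervalIntegral.integral_mono_on hab.le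
  · exact intInt hab (continuousOn_const.mul (iter2_contOn hab hv))
  · exact intInt hab (hW.continuousOn.mul (iter2_contOn hab hv))
  · intro x hx
    exact mul_le_mul_of_nonneg_right (hx0min hx) (hvpos x hx).le

end Lsec

/-! ### bump and base functions -/

section Bump
variable {a b c d A B : ℝ}

def bump (c d : ℝ) : ℝ → ℝ := fun x => max 0 (1 - |x - (c+d)/2| * (2/(d-c)))

lemma bump_cont : Continuous (bump c d) :=
  continuous_const.max (continuous_const.sub
    (((continuous_id.sub continuous_const).abs).mul continuous_const))

lemma bump_nonneg (x : ℝ) : 0 ≤ bump c d x := le_max_left _ _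

lemma bump_eq_zero (hcd : c < d) {x : ℝ} (hx : (d-c)/2 ≤ |x - (c+d)/2|) : bump c d x = 0 := by
  apply max_eq_left
  have h0 : (0:ℝ) < d - c := by linarith
  have h2 : (0:ℝ) < 2/(d-c) := by positivity
  have := mul_le_mul_of_nonneg_right hx h2.le
  have heq : (d-c)/2 * (2/(d-c)) = 1 := by
    rw [div_mul_div_comm, div_eq_one_iff_eq (by positivity)]; ring
  linarith [heq ▸ this]

lemma bump_supp (hcd : c < d) {x : ℝ} (h : 0 < bump c d x) : |x - (c+d)/2| < (d-c)/2 := by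
  by_contra hc
  push_neg at hc
  rw [bump_eq_zero hcd hc] at h
  exact lt_irrefl 0 h

lemma bump_pos (hcd : c < d) {x : ℝ} (h : |x - (c+d)/2| < (d-c)/2) : 0 < bump c d x := by
  apply lt_max_of_lt_right
  have h0 : (0:ℝ) < d - c := by linarith
  have h2 : (0:ℝ) < 2/(d-c) := by positivity
  have := mul_lt_mul_of_pos_right h h2
  have heq : (d-c)/2 * (2/(d-c)) = 1 := by rw [div_mul_div_comm, div_eq_one_iff_eq (by positivity)]; ring
  linarith [heq ▸ this]

lemma bump_integral_pos (hac : a ≤ c) (hcd : c < d) (hdb : d ≤ b) :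
    0 < ∫ x in a..b, bump c d x := by
  have i1 : IntervalIntegrable (bump c d) volume a c := bump_cont.intervalIntegrable _ _
  have i2 : IntervalIntegrable (bump c d) volume c d := bump_cont.intervalIntegrable _ _
  have i3 : IntervalIntegrable (bump c d) volume d b := bump_cont.intervalIntegrable _ _
  have i23 : IntervalIntegrable (bump c d) volume c b := bump_cont.intervalIntegrable _ _
  have e1 := intervalIntegral.integral_add_adjacent_intervals i2 i3
  have e2 := intervalIntegral.integral_add_adjacent_intervals i1 i23
  have hcdpos : 0 < ∫ x in c..d, bump c d x := by
    apply intervalIntegral_pos_of_pos_on i2 _ hcd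
    intro x hx
    apply bump_pos hcd
    rw [abs_lt]
    obtain ⟨h1', h2'⟩ := hx
    constructor <;> linarith
  have h13 : 0 ≤ ∫ x in a..c, bump c d x :=
    intervalIntegral.integral_nonneg hac fun u _ => bump_nonneg u
  have h33 : 0 ≤ ∫ x in d..b, bump c d x :=
    intervalIntegral.integral_nonneg hdb fun u _ => bump_nonneg u
  rw [← e2, ← e1]
  linarith

def basefn (a b A B : ℝ) : ℝ → ℝ := fun x => ((b - x) * A + (x - a) * B)/(b - a)

lemma basefn_cont : Continuous (basefn a b A B) :=
  (((continuous_const.sub continuous_id).mul continuous_const).add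
    ((continuous_id.sub continuous_const).mul continuous_const)).div_const _

lemma basefn_a (hab : a < b) : basefn a b A B a = A := by
  have h : b - a ≠ 0 := by linarith
  unfold basefn; field_simp; ring

lemma basefn_b (hab : a < b) : basefn a b A B b = B := by
  have h : b - a ≠ 0 := by linarith
  unfold basefn; field_simp; ring

lemma basefn_pos (hab : a < b) (hA : 0 < A) (hB : 0 < B) {x : ℝ} (hx : x ∈ Icc a b) :
    0 < basefn a b A B x := by
  unfold basefn
  apply div_pos _ (by linarith)
  rcases eq_or_lt_of_le hx.2 with h | h
  · have : (b - x) * A = 0 := by rw [h]; ring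
    rw [this]
    have : 0 < (x - a) * B := mul_pos (by linarith [hx.1, hab]) hB
    linarith
  · have h1 : 0 < (b - x) * A := mul_pos (by linarith) hA
    have h2 : 0 ≤ (x - a) * B := mul_nonneg (by linarith [hx.1]) hB.le
    linarith

end Bump

section Main
variable {a b θ ψa ψb lam C : ℝ} {f W g : ℝ → ℝ}

lemma V_contDiffOn2 (hab : a < b) (hg : Continuous g) (r s : ℝ) :
    ContDiffOn ℝ 2 (V g a r s) (Icc a b) := by
  have h := V_contDiffOn hab hg r s (n := 0) (contDiffOn_zero.mpr hg.continuousOn)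
  norm_num at h
  exact h

lemma V_contDiffOn4 (hab : a < b) (hg : Continuous g)
    (hg2 : ContDiffOn ℝ 2 g (Icc a b)) (r s : ℝ) :
    ContDiffOn ℝ 4 (V g a r s) (Icc a b) := by
  have h := V_contDiffOn hab hg r s (n := 2) hg2
  norm_num at h
  exact h

/-- If `L` is proper then any `C²` solution `W` of `W'' = f` with the right boundary data
is positive on `[a,b]`. -/
lemma W_pos_of_proper (hab : a < b) (hθ1 : θ < 1)
    (hψa : 0 < ψa) (hψb : 0 < ψb) (hlam : 0 < lam)
    (hW : ContDiffOn ℝ 2 W (Icc a b))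
    (hWf : ∀ x ∈ Ioo a b, iteratedDerivWithin 2 W (Icc a b) x = f x)
    (hWa : W a = ψa) (hWb : W b = ψb)
    (hprop : ∀ v : ℝ → ℝ, admissible1d θ a b ψa ψb v →
      Lfunc1d f a b ψa ψb v ≥
        lam * (derivWithin v (Icc a b) b - derivWithin v (Icc a b) a) - C)
    {x0 : ℝ} (hx0 : x0 ∈ Icc a b) : 0 < W x0 := by
  by_contra hneg
  push_neg at hneg
  -- find δ such that W < lam/2 near x0
  have hcontW : ContinuousWithinAt W (Icc a b) x0 := hW.continuousOn x0 hx0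
  rw [Metric.continuousWithinAt_iff] at hcontW
  obtain ⟨δ, hδpos, hδ⟩ := hcontW (lam/2 - W x0) (by linarith)
  have key : ∀ x ∈ Icc a b, |x - x0| < δ → W x < lam/2 := by
    intro x hx hd
    have h1 := hδ hx (by rw [Real.dist_eq]; exact hd)
    rw [Real.dist_eq] at h1
    have h2 := le_abs_self (W x - W x0)
    linarith
  -- the spike interval
  set c := max a (x0 - δ/2) with hc
  set d := min b (x0 + δ/2) with hd
  have hcd : c < d := max_lt_iff.mpr
    ⟨lt_min_iff.mpr ⟨hab, by linarith [hx0.1]⟩,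
     lt_min_iff.mpr ⟨by linarith [hx0.2], by linarith⟩⟩
  have hac : a ≤ c := le_max_left _ _
  have hdb : d ≤ b := min_le_left _ _
  have hsupp : ∀ x : ℝ, 0 < bump c d x → x ∈ Icc a b ∧ |x - x0| < δ := by
    intro x h
    have h2 := bump_supp hcd h
    rw [abs_lt] at h2
    obtain ⟨h21, h22⟩ := h2
    have hcx : c < x := by linarith
    have hxd : x < d := by linarith
    have hxc1 : x0 - δ/2 ≤ c := le_max_right _ _
    have hxd1 : d ≤ x0 + δ/2 := min_le_right _ _
    refine ⟨⟨by linarith, by linarith⟩, ?_⟩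
    rw [abs_lt]
    constructor <;> linarith
  -- base function
  set A := ψa ^ (1/(θ-1)) with hA'
  set B := ψb ^ (1/(θ-1)) with hB'
  have hA : 0 < A := Real.rpow_pos_of_pos hψa _
  have hB : 0 < B := Real.rpow_pos_of_pos hψb _
  set base := basefn a b A B with hbase
  -- masses and constants
  set mb := ∫ x in a..b, bump c d x with hmb
  have hmbpos : 0 < mb := bump_integral_pos hac hcd hdb
  set Ib := ∫ x in a..b, base x with hIb
  set IWb := ∫ x in a..b, W x * base x with hIWb
  set K1 := IWb - lam * Ib + C with hK1
  have hq : 0 < lam/2 * mb := by positivity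
  set M := max 1 ((K1 + 1)/(lam/2 * mb)) with hM
  have hM1 : (1:ℝ) ≤ M := le_max_left _ _
  have hM0 : 0 < M := by linarith
  -- the test function
  set g0 : ℝ → ℝ := fun x => base x + M * bump c d x with hg0
  have hgcont : Continuous g0 := basefn_cont.add (continuous_const.mul bump_cont)
  have hgpos : ∀ x ∈ Icc a b, 0 < g0 x := fun x hx =>
    add_pos_of_pos_of_nonneg (basefn_pos hab hA hB hx) (mul_nonneg hM0.le (bump_nonneg _))
  have hbumpa : bump c d a = 0 := by
    apply bump_eq_zero hcd
    rw [abs_sub_comm, abs_of_nonneg (by linarith)]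
    linarith
  have hbumpb : bump c d b = 0 := by
    apply bump_eq_zero hcd
    rw [abs_of_nonneg (by linarith)]
    linarith
  have hga : g0 a = A := by rw [hg0]; simp only; rw [hbumpa, hbase, basefn_a hab]; ring
  have hgb : g0 b = B := by rw [hg0]; simp only; rw [hbumpb, hbase, basefn_b hab]; ring
  set e1 := -(P (P g0 a) a b)/(b - a) with he1
  set v := V g0 a 0 e1 with hv
  have hiter : ∀ x ∈ Icc a b, iteratedDerivWithin 2 v (Icc a b) x = g0 x := fun x hx =>
    V_iter2 hab hgcont _ _ hx
  have hv2 : ContDiffOn ℝ 2 v (Icc a b) := V_contDiffOn2 hab hgcont _ _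
  have hva : v a = 0 := V_a _ _ _
  have hvb : v b = 0 := by
    have hba : b - a ≠ 0 := by linarith
    rw [hv, V_b, he1, div_mul_cancel₀ _ hba]
    ring
  have hadm : admissible1d θ a b ψa ψb v := by
    refine ⟨hv2, fun x hx => ?_, hva, hvb, ?_, ?_⟩
    · rw [hiter x hx]; exact hgpos x hx
    · rw [hiter a (left_mem_Icc.mpr hab.le), hga, hA']
      exact rpow_inv_cancel hθ1 hψa
    · rw [hiter b (right_mem_Icc.mpr hab.le), hgb, hB']
      exact rpow_inv_cancel hθ1 hψb
  have hLv := hprop v hadm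
  -- compute the two sides
  have hdv : derivWithin v (Icc a b) b - derivWithin v (Icc a b) a = ∫ x in a..b, g0 x := by
    rw [← integral_iter2 hab hv2]
    apply intervalIntegral.integral_congr
    intro x hx
    rw [uIcc_of_le hab.le] at hx
    exact hiter x hx
  have hL : Lfunc1d f a b ψa ψb v = ∫ x in a..b, W x * g0 x := by
    rw [L_eq hab hW hWf hWa hWb hv2 hva hvb]
    apply intervalIntegral.integral_congr
    intro x hx
    rw [uIcc_of_le hab.le] at hx
    show W x * iteratedDerivWithin 2 v (Icc a b) x = W x * g0 x
    rw [hiter x hx]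
  rw [hL, hdv] at hLv
  -- integrability facts
  have iWbase : IntervalIntegrable (fun x => W x * base x) volume a b :=
    intInt hab (hW.continuousOn.mul basefn_cont.continuousOn)
  have iWbump : IntervalIntegrable (fun x => W x * bump c d x) volume a b :=
    intInt hab (hW.continuousOn.mul bump_cont.continuousOn)
  have ibase : IntervalIntegrable base volume a b := basefn_cont.intervalIntegrable _ _
  have ibump : IntervalIntegrable (bump c d) volume a b := bump_cont.intervalIntegrable _ _
  -- expand the integrals
  have hsplit1 : ∫ x in a..b, W x * g0 x = IWb + M * ∫ x in a..b, W x * bump c d x := by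
    have h1 : ∀ x, W x * g0 x = W x * base x + M * (W x * bump c d x) := by
      intro x; rw [hg0]; ring
    rw [intervalIntegral.integral_congr (g := fun x => W x * base x + M * (W x * bump c d x))
      fun x _ => h1 x]
    rw [intervalIntegral.integral_add iWbase (iWbump.const_mul M),
      intervalIntegral.integral_const_mul]
  have hsplit2 : ∫ x in a..b, g0 x = Ib + M * mb := by
    rw [intervalIntegral.integral_congr (g := fun x => base x + M * bump c d x) fun x _ => rfl]
    rw [intervalIntegral.integral_add ibase (ibump.const_mul M),
      intervalIntegral.integral_const_mul]
  -- the upper estimate on the spike integral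
  have hWbump : ∫ x in a..b, W x * bump c d x ≤ lam/2 * mb := by
    rw [hmb, ← intervalIntegral.integral_const_mul]
    apply intervalIntegral.integral_mono_on hab.le iWbump
      (intInt hab (continuousOn_const.mul bump_cont.continuousOn))
    intro x hx
    rcases eq_or_lt_of_le (bump_nonneg (c := c) (d := d) x) with h | h
    · rw [← h]; simp [← h]
    · obtain ⟨hxI, hxd⟩ := hsupp x h
      exact mul_le_mul_of_nonneg_right (key x hxI hxd).le (bump_nonneg _)
  -- the contradiction
  rw [hsplit1, hsplit2] at hLv
  have hfinal : M * (lam/2 * mb) ≤ K1 := by nlinarith [mul_le_mul_of_nonneg_left hWbump hM0.le]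
  have hMlarge : K1 + 1 ≤ M * (lam/2 * mb) := by
    have := le_max_right 1 ((K1 + 1)/(lam/2 * mb))
    calc K1 + 1 = (K1 + 1)/(lam/2 * mb) * (lam/2 * mb) := by field_simp
      _ ≤ M * (lam/2 * mb) := mul_le_mul_of_nonneg_right this hq.le
  linarith

end Main

section Assemble
variable {a b θ ψa ψb : ℝ} {f : ℝ → ℝ}

/-- forward implication: solvability implies properness -/
lemma proper_of_solution (hab : a < b) (hθ1 : θ < 1) (hψa : 0 < ψa) (hψb : 0 < ψb)
    (hsol : ∃ u : ℝ → ℝ,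
      ContDiffOn ℝ 4 u (Icc a b) ∧
      (∀ x ∈ Icc a b, 0 < iteratedDerivWithin 2 u (Icc a b) x) ∧
      (∀ x ∈ Ioo a b,
        iteratedDerivWithin 2
          (fun y => (iteratedDerivWithin 2 u (Icc a b) y) ^ (θ - 1)) (Icc a b) x = f x) ∧
      (iteratedDerivWithin 2 u (Icc a b) a) ^ (θ - 1) = ψa ∧
      (iteratedDerivWithin 2 u (Icc a b) b) ^ (θ - 1) = ψb) :
    ∃ lam > (0:ℝ), ∃ C : ℝ, ∀ v : ℝ → ℝ, admissible1d θ a b ψa ψb v →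
      Lfunc1d f a b ψa ψb v ≥
        lam * (derivWithin v (Icc a b) b - derivWithin v (Icc a b) a) - C := by
  obtain ⟨u, hu4, hupos, heq, hua, hub⟩ := hsol
  set W : ℝ → ℝ := fun x => (iteratedDerivWithin 2 u (Icc a b) x) ^ (θ - 1) with hWdef
  have hW : ContDiffOn ℝ 2 W (Icc a b) :=
    contDiffOn_rpow_comp (iter2_contDiffOn hab hu4) hupos (θ - 1)
  have hWpos : ∀ x ∈ Icc a b, 0 < W x := fun x hx =>
    Real.rpow_pos_of_pos (hupos x hx) _
  obtain ⟨lam, hlam, C, h⟩ := forward_of_W hab hW heq hua hub hWpos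
  exact ⟨lam, hlam, C, fun v hv => h v ⟨hv.1, hv.2.1, hv.2.2.1, hv.2.2.2.1⟩⟩

end Assemble

section MoreHolder
variable {K K' e : ℝ} {f : ℝ → ℝ} {s : Set ℝ}

lemma HolderD.mul_const (h : HolderD K e f s) (c : ℝ) :
    HolderD (K * |c|) e (fun x => f x * c) s := by
  intro x hx y hy
  have : f x * c - f y * c = (f x - f y) * c := by ring
  rw [this, abs_mul]
  calc |f x - f y| * |c| ≤ K * |x - y| ^ e * |c| :=
        mul_le_mul_of_nonneg_right (h x hx y hy) (abs_nonneg c)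
    _ = K * |c| * |x - y| ^ e := by ring

lemma HolderD.weaken (h : HolderD K e f s) (hK : K ≤ K') :
    HolderD K' e f s := fun x hx y hy =>
  (h x hx y hy).trans (mul_le_mul_of_nonneg_right hK (Real.rpow_nonneg (abs_nonneg _) _))

end MoreHolder

section Backward
variable {a b θ ψa ψb : ℝ} {f : ℝ → ℝ}

set_option maxHeartbeats 2000000 in
/-- backward implication: properness implies solvability -/
lemma solution_of_proper (hab : a < b) (hθ1 : θ < 1) {α : ℝ≥0} (hα0 : 0 < α) (hα1 : α < 1)
    (hψa : 0 < ψa) (hψb : 0 < ψb)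
    (hfc : ContinuousOn f (Icc a b)) (hfh : ∃ C : ℝ≥0, HolderOnWith C α f (Icc a b))
    (hprop : ∃ lam > (0:ℝ), ∃ C : ℝ, ∀ v : ℝ → ℝ, admissible1d θ a b ψa ψb v →
      Lfunc1d f a b ψa ψb v ≥
        lam * (derivWithin v (Icc a b) b - derivWithin v (Icc a b) a) - C) :
    ∃ u : ℝ → ℝ,
      ContDiffOn ℝ 4 u (Icc a b) ∧
      (∃ C : ℝ≥0, HolderOnWith C α (iteratedDerivWithin 4 u (Icc a b)) (Icc a b)) ∧
      (∀ x ∈ Icc a b, 0 < iteratedDerivWithin 2 u (Icc a b) x) ∧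
      (∀ x ∈ Ioo a b,
        iteratedDerivWithin 2
          (fun y => (iteratedDerivWithin 2 u (Icc a b) y) ^ (θ - 1)) (Icc a b) x = f x) ∧
      u a = 0 ∧ u b = 0 ∧
      (iteratedDerivWithin 2 u (Icc a b) a) ^ (θ - 1) = ψa ∧
      (iteratedDerivWithin 2 u (Icc a b) b) ^ (θ - 1) = ψb := by
  obtain ⟨lam, hlam, C, hLp⟩ := hprop
  have hI := uniqueDiffOn_Icc hab
  have hba : b - a ≠ 0 := by linarith
  -- continuous extension of f
  set fE : ℝ → ℝ := fun x => f (max a (min b x)) with hfE'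
  have hclamp : ∀ x : ℝ, max a (min b x) ∈ Icc a b := fun x =>
    ⟨le_max_left _ _, max_le hab.le (min_le_left _ _)⟩
  have hfEc : Continuous fE :=
    hfc.comp_continuous (continuous_const.max (continuous_const.min continuous_id)) hclamp
  have hfEeq : EqOn fE f (Icc a b) := fun x hx => by
    simp only [hfE']; rw [min_eq_right hx.2, max_eq_right hx.1]
  -- the solution w of w'' = f with boundary data ψa ψb
  set c1 := (ψb - ψa - P (P fE a) a b)/(b - a) with hc1
  set w := V fE a ψa c1 with hwdef
  have hwc : Continuous w := V_cont hfEc a ψa c1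
  have hw2 : ContDiffOn ℝ 2 w (Icc a b) := V_contDiffOn2 hab hfEc _ _
  have hwa : w a = ψa := V_a _ _ _
  have hwb : w b = ψb := by
    rw [hwdef, V_b, hc1, div_mul_cancel₀ _ hba]; ring
  have hwiter : ∀ x ∈ Icc a b, iteratedDerivWithin 2 w (Icc a b) x = fE x := fun x hx =>
    V_iter2 hab hfEc _ _ hx
  have hwf : ∀ x ∈ Ioo a b, iteratedDerivWithin 2 w (Icc a b) x = f x := fun x hx => by
    rw [hwiter x (mem_Icc_of_Ioo hx)]; exact hfEeq (mem_Icc_of_Ioo hx)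
  -- positivity of w from properness
  have hwpos : ∀ x ∈ Icc a b, 0 < w x := fun x hx =>
    W_pos_of_proper hab hθ1 hψa hψb hlam hw2 hwf hwa hwb hLp hx
  obtain ⟨xm, hxmI, hxmmin⟩ := isCompact_Icc.exists_isMinOn (nonempty_Icc.mpr hab.le)
    hwc.continuousOn
  have hm : 0 < w xm := hwpos xm hxmI
  have hmle : ∀ x ∈ Icc a b, w xm ≤ w x := fun x hx => hxmmin hx
  -- the function h = w^{1/(θ-1)}, extended continuously
  set hfun : ℝ → ℝ := fun x => (max (w x) (w xm)) ^ (1/(θ-1)) with hh'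
  have hhc : Continuous hfun := by
    rw [continuous_iff_continuousAt]
    intro x
    exact ((hwc.max continuous_const).rpow_const
      (fun y => Or.inl (ne_of_gt (lt_max_of_lt_right hm)))).continuousAt
  have hheq : EqOn hfun (fun x => w x ^ (1/(θ-1))) (Icc a b) := fun x hx => by
    simp only [hh']; rw [max_eq_left (hmle x hx)]
  have hh2 : ContDiffOn ℝ 2 hfun (Icc a b) :=
    (contDiffOn_rpow_comp hw2 hwpos (1/(θ-1))).congr hheq
  -- the solution u
  set c3 := -(P (P hfun a) a b)/(b - a) with hc3
  set u := V hfun a 0 c3 with hu'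
  have huiter : ∀ x ∈ Icc a b, iteratedDerivWithin 2 u (Icc a b) x = hfun x := fun x hx =>
    V_iter2 hab hhc _ _ hx
  have haI : a ∈ Icc a b := left_mem_Icc.mpr hab.le
  have hbI : b ∈ Icc a b := right_mem_Icc.mpr hab.le
  have hcomb : EqOn (fun y => (iteratedDerivWithin 2 u (Icc a b) y) ^ (θ - 1)) w (Icc a b) := by
    intro y hy
    simp only
    rw [huiter y hy, hheq hy]
    exact rpow_inv_cancel hθ1 (hwpos y hy)
  refine ⟨u, V_contDiffOn4 hab hhc hh2 _ _, ?holder, ?pos, ?eq, V_a _ _ _, ?ub, ?bca, ?bcb⟩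
  case pos =>
    intro x hx
    rw [huiter x hx]
    exact Real.rpow_pos_of_pos (lt_max_of_lt_right hm) _
  case eq =>
    intro x hx
    rw [iteratedDerivWithin_congr hcomb (mem_Icc_of_Ioo hx)]
    exact hwf x hx
  case ub =>
    rw [hu', V_b, hc3, div_mul_cancel₀ _ hba]; ring
  case bca =>
    rw [huiter a haI, hheq haI]
    exact (rpow_inv_cancel hθ1 (hwpos a haI)).trans hwa
  case bcb =>
    rw [huiter b hbI, hheq hbI]
    exact (rpow_inv_cancel hθ1 (hwpos b hbI)).trans hwb
  case holder =>
    -- explicit formula for the fourth derivative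
    set w1 : ℝ → ℝ := fun y => P fE a y + c1 with hw1'
    have hw1d : ∀ x : ℝ, HasDerivAt w (w1 x) x := fun x => V_hasDerivAt hfEc a ψa c1 x
    have hw1c1 : ContDiffOn ℝ 1 w1 (Icc a b) := by
      have h0 := contDiffOn_P_succ hab hfEc (n := 0)
        (by simp) (contDiffOn_zero.mpr hfEc.continuousOn)
      norm_num at h0
      exact h0.add contDiffOn_const
    set D3 : ℝ → ℝ := fun y => w1 y * (1/(θ-1)) * w y ^ ((1/(θ-1)) - 1) with hD3'
    set D4 : ℝ → ℝ := fun x => fE x * (1/(θ-1)) * w x ^ ((1/(θ-1)) - 1)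
      + w1 x * (1/(θ-1)) * (w1 x * ((1/(θ-1)) - 1) * w x ^ ((1/(θ-1)) - 1 - 1)) with hD4'
    have hD3deriv : ∀ x ∈ Icc a b, HasDerivWithinAt D3 (D4 x) (Icc a b) x := by
      intro x hx
      have h1 : HasDerivWithinAt (fun y => w1 y * (1/(θ-1))) (fE x * (1/(θ-1))) (Icc a b) x :=
        (((P_hasDerivAt hfEc a x).add_const c1).mul_const _).hasDerivWithinAt
      have h2 : HasDerivWithinAt (fun y => w y ^ ((1/(θ-1)) - 1))
          (w1 x * ((1/(θ-1)) - 1) * w x ^ ((1/(θ-1)) - 1 - 1)) (Icc a b) x :=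
        (hw1d x).hasDerivWithinAt.rpow_const (Or.inl (ne_of_gt (hwpos x hx)))
      exact h1.mul h2
    have hiter3 : EqOn (iteratedDerivWithin 3 u (Icc a b)) D3 (Icc a b) := by
      intro x hx
      rw [show (3:ℕ) = 2+1 from rfl, iteratedDerivWithin_succ]
      have e2 : EqOn (iteratedDerivWithin 2 u (Icc a b)) (fun y => w y ^ (1/(θ-1)))
          (Icc a b) := fun y hy => by rw [huiter y hy]; exact hheq hy
      rw [derivWithin_congr e2 (e2 hx)]
      exact ((hw1d x).hasDerivWithinAt.rpow_const
        (Or.inl (ne_of_gt (hwpos x hx)))).derivWithin (hI x hx)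
    have hiter4 : EqOn (iteratedDerivWithin 4 u (Icc a b)) D4 (Icc a b) := by
      intro x hx
      rw [show (4:ℕ) = 3+1 from rfl, iteratedDerivWithin_succ,
        derivWithin_congr hiter3 (hiter3 hx)]
      exact (hD3deriv x hx).derivWithin (hI x hx)
    -- Hölder estimates
    have he0 : (0:ℝ) < (α : ℝ) := hα0
    have he1 : (α : ℝ) ≤ 1 := by exact_mod_cast hα1.le
    obtain ⟨Cf, hCf⟩ := hfh
    have hfD : HolderD Cf α fE (Icc a b) :=
      holderD_congr hfEeq.symm (holderD_of_holderOnWith hCf)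
    have hB1c : ContDiffOn ℝ 1 (fun x => w x ^ ((1/(θ-1)) - 1)) (Icc a b) :=
      contDiffOn_rpow_comp (hw2.of_le (by norm_num)) hwpos _
    have hB2c : ContDiffOn ℝ 1 (fun x => w x ^ ((1/(θ-1)) - 1 - 1)) (Icc a b) :=
      contDiffOn_rpow_comp (hw2.of_le (by norm_num)) hwpos _
    obtain ⟨K1, hK10, hK1⟩ := lip_of_contDiffOn hab hB1c
    obtain ⟨K2, hK20, hK2⟩ := lip_of_contDiffOn hab hB2c
    obtain ⟨K3, hK30, hK3⟩ := lip_of_contDiffOn hab hw1c1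
    obtain ⟨KB1, hB1D⟩ : ∃ K, HolderD K α (fun x => w x ^ ((1/(θ-1)) - 1)) (Icc a b) :=
      ⟨_, holderD_of_lip hab hK10 he0 he1 hK1⟩
    obtain ⟨KB2, hB2D⟩ : ∃ K, HolderD K α (fun x => w x ^ ((1/(θ-1)) - 1 - 1)) (Icc a b) :=
      ⟨_, holderD_of_lip hab hK20 he0 he1 hK2⟩
    obtain ⟨KW1, hw1D⟩ : ∃ K, HolderD K α w1 (Icc a b) :=
      ⟨_, holderD_of_lip hab hK30 he0 he1 hK3⟩
    obtain ⟨KF, hFD⟩ : ∃ K, HolderD K α fE (Icc a b) :=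
      ⟨_, holderD_congr hfEeq.symm (holderD_of_holderOnWith hCf)⟩
    obtain ⟨M1, hM10, hM1⟩ := bound_of_continuousOn (hB1c.continuousOn)
    obtain ⟨M2, hM20, hM2⟩ := bound_of_continuousOn (hB2c.continuousOn)
    obtain ⟨M3, hM30, hM3⟩ := bound_of_continuousOn (hw1c1.continuousOn)
    obtain ⟨Mf1, hMf10, hMf1⟩ := bound_of_continuousOn
      ((hfEc.continuousOn (s := Icc a b)).mul continuousOn_const :
        ContinuousOn (fun x => fE x * (1/(θ-1))) (Icc a b))
    obtain ⟨Mw2, hMw20, hMw2⟩ := bound_of_continuousOn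
      (((hw1c1.continuousOn.mul hw1c1.continuousOn).mul continuousOn_const) :
        ContinuousOn (fun x => w1 x * w1 x * ((1/(θ-1)) * ((1/(θ-1)) - 1))) (Icc a b))
    have t1 := (hFD.mul_const (1/(θ-1))).mul hB1D hMf1 hM1
    have t2a := hw1D.mul hw1D hM3 hM3
    have t2 := (t2a.mul_const ((1/(θ-1)) * ((1/(θ-1)) - 1))).mul hB2D hMw2 hM2
    have tsum := t1.add t2
    obtain ⟨K4, hK4⟩ : ∃ K, HolderD K α D4 (Icc a b) := by
      refine ⟨_, holderD_congr ?_ tsum⟩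
      intro x _
      simp only [hD4']
      generalize w x ^ ((1/(θ-1)) - 1) = t1'
      generalize w x ^ ((1/(θ-1)) - 1 - 1) = t2'
      ring
    exact ⟨(max K4 0).toNNReal, holderOnWith_of_holderD (le_max_right _ _)
      (holderD_congr hiter4.symm (hK4.weaken (le_max_left _ _)))⟩

end Backward
end BVPAux

/-- In dimension one, the second boundary value problem
`((u'')^{θ-1})'' = f`, `u(a) = u(b) = 0`, `(u''(a))^{θ-1} = ψa`, `(u''(b))^{θ-1} = ψb`
is solvable in `C^{4,α}([a,b])` if and only if the functional `L` is proper. -/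
theorem second_bvp_dim_one_iff_proper
    (θ : ℝ) (hθ0 : 0 ≤ θ) (hθ1 : θ < 1) (α : ℝ≥0) (hα0 : 0 < α) (hα1 : α < 1)
    (a b : ℝ) (hab : a < b)
    (f : ℝ → ℝ) (hf : ∃ C : ℝ≥0, HolderOnWith C α f (Icc a b))
    (hfc : ContinuousOn f (Icc a b))
    (ψa ψb : ℝ) (hψa : 0 < ψa) (hψb : 0 < ψb) :
    (∃ u : ℝ → ℝ,
        ContDiffOn ℝ 4 u (Icc a b) ∧
        (∃ C : ℝ≥0, HolderOnWith C α (iteratedDerivWithin 4 u (Icc a b)) (Icc a b)) ∧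
        (∀ x ∈ Icc a b, 0 < iteratedDerivWithin 2 u (Icc a b) x) ∧
        (∀ x ∈ Ioo a b,
          iteratedDerivWithin 2
            (fun y => (iteratedDerivWithin 2 u (Icc a b) y) ^ (θ - 1)) (Icc a b) x = f x) ∧
        u a = 0 ∧ u b = 0 ∧
        (iteratedDerivWithin 2 u (Icc a b) a) ^ (θ - 1) = ψa ∧
        (iteratedDerivWithin 2 u (Icc a b) b) ^ (θ - 1) = ψb) ↔
    (∃ lam > (0:ℝ), ∃ C : ℝ, ∀ v : ℝ → ℝ, admissible1d θ a b ψa ψb v →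
        Lfunc1d f a b ψa ψb v ≥
          lam * (derivWithin v (Icc a b) b - derivWithin v (Icc a b) a) - C) := by
  constructor
  · rintro ⟨u, h1, -, h3, h4, -, -, h7, h8⟩
    exact BVPAux.proper_of_solution hab hθ1 hψa hψb ⟨u, h1, h3, h4, h7, h8⟩
  · intro h
    exact BVPAux.solution_of_proper hab hθ1 hα0 hα1 hψa hψb hfc hf h
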